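/- Let S ⊆ {1,…,n−1} be a nonempty admissible set, let m = max(S), fix an integer k with 1 ≤ k ≤ n, and set S₁ = S∖{m} and S₂ = S₁ ∪ {m−1}. Then |P(S;n)_{↘k}| = C(n−k, n−m)·|P(S₁;m−1)| − |P(S₁;n)_{↘k}| − |P(S₂;n)_{↘k}|, where C(a,b) denotes the binomial coefficient. -/

import Mathlib

open Equiv

/-- Position `i` (1-based, with `1 < i < n`) is a peak of the permutation `π ∈ S_n`.
The value of `π` at 1-based position `j` is `π ⟨j - 1, _⟩`; values are 0-based
(`π i = v` means the written value is `v + 1`). -/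
def IsPeak {n : ℕ} (π : Equiv.Perm (Fin n)) (i : ℕ) : Prop :=
  ∃ h : 1 < i ∧ i < n,
    π ⟨i - 2, by omega⟩ < π ⟨i - 1, by omega⟩ ∧ π ⟨i, by omega⟩ < π ⟨i - 1, by omega⟩

/-- `P(S;n)`: permutations in `S_n` with peak set `S`. -/
def peakSetEq (n : ℕ) (S : Finset ℕ) : Set (Equiv.Perm (Fin n)) :=
  {π | ∀ i : ℕ, IsPeak π i ↔ i ∈ S}

/-- `π` ends with an ascent to `k`: `π_{n-1} < π_n` and `π_n = k` (values written `1..n`). -/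
def EndsAscentTo (n k : ℕ) (π : Equiv.Perm (Fin n)) : Prop :=
  ∃ h : 2 ≤ n, π ⟨n - 2, by omega⟩ < π ⟨n - 1, by omega⟩ ∧ ((π ⟨n - 1, by omega⟩ : ℕ) + 1 = k)

/-- `π` ends with a descent to `k`: `π_{n-1} > π_n` and `π_n = k`. -/
def EndsDescentTo (n k : ℕ) (π : Equiv.Perm (Fin n)) : Prop :=
  ∃ h : 2 ≤ n, π ⟨n - 1, by omega⟩ < π ⟨n - 2, by omega⟩ ∧ ((π ⟨n - 1, by omega⟩ : ℕ) + 1 = k)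

/-- `π` ends with an ascent: `π_{n-1} < π_n`. -/
def EndsAscent (n : ℕ) (π : Equiv.Perm (Fin n)) : Prop :=
  ∃ h : 2 ≤ n, π ⟨n - 2, by omega⟩ < π ⟨n - 1, by omega⟩

/-- `π` ends with a descent: `π_{n-1} > π_n`. -/
def EndsDescent (n : ℕ) (π : Equiv.Perm (Fin n)) : Prop :=
  ∃ h : 2 ≤ n, π ⟨n - 1, by omega⟩ < π ⟨n - 2, by omega⟩

/-- `P(S;n)^{↗k}` -/
def ascTo (n : ℕ) (S : Finset ℕ) (k : ℕ) : Set (Equiv.Perm (Fin n)) :=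
  {π ∈ peakSetEq n S | EndsAscentTo n k π}

/-- `P(S;n)_{↘k}` -/
def descTo (n : ℕ) (S : Finset ℕ) (k : ℕ) : Set (Equiv.Perm (Fin n)) :=
  {π ∈ peakSetEq n S | EndsDescentTo n k π}

/-- `overline{P(S;n)}`: elements of `P(S;n)` ending with an ascent. -/
def overlineP (n : ℕ) (S : Finset ℕ) : Set (Equiv.Perm (Fin n)) :=
  {π ∈ peakSetEq n S | EndsAscent n π}

/-- `underline{P(S;n)}`: elements of `P(S;n)` ending with a descent. -/
def underlineP (n : ℕ) (S : Finset ℕ) : Set (Equiv.Perm (Fin n)) :=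
  {π ∈ peakSetEq n S | EndsDescent n π}

/-- Type `C_n` mirrored permutations: `τ_{2n-i+1} = 2n - τ_i + 1` for all `1 ≤ i ≤ 2n`
(1-based); equivalently `τ (j.rev) = (τ j).rev` in 0-based `Fin (2*n)` terms. -/
def mirroredC (n : ℕ) : Set (Equiv.Perm (Fin (2 * n))) :=
  {τ | ∀ j, τ j.rev = (τ j).rev}

/-- Type `D_n` mirrored permutations: mirrored, and the first `n` positions carry an even
number of values from `{n+1, …, 2n}` (i.e. 0-based values `≥ n`). -/
def mirroredD (n : ℕ) : Set (Equiv.Perm (Fin (2 * n))) :=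
  {τ | (∀ j, τ j.rev = (τ j).rev) ∧
    Even ((Finset.univ.filter fun j : Fin (2 * n) => (j : ℕ) < n ∧ n ≤ (τ j : ℕ)).card)}

/-- The pattern bundle `𝒞_n(π)`: mirrored permutations whose first `n` entries have the
same relative order as `π`. -/
def bundleC (n : ℕ) (π : Equiv.Perm (Fin n)) : Set (Equiv.Perm (Fin (2 * n))) :=
  {τ ∈ mirroredC n | ∀ i j : Fin n,
    τ (Fin.castLE (by omega) i) < τ (Fin.castLE (by omega) j) ↔ π i < π j}

/-- The pattern bundle `𝒟_n(π)`. -/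
def bundleD (n : ℕ) (π : Equiv.Perm (Fin n)) : Set (Equiv.Perm (Fin (2 * n))) :=
  {τ ∈ mirroredD n | ∀ i j : Fin n,
    τ (Fin.castLE (by omega) i) < τ (Fin.castLE (by omega) j) ↔ π i < π j}

/-- Position `i` (1-based, `1 < i < n`) is a peak of the first `n` entries of `τ`. -/
def IsPeakFirst (n : ℕ) (τ : Equiv.Perm (Fin (2 * n))) (i : ℕ) : Prop :=
  ∃ h : 1 < i ∧ i < n,
    τ ⟨i - 2, by omega⟩ < τ ⟨i - 1, by omega⟩ ∧ τ ⟨i, by omega⟩ < τ ⟨i - 1, by omega⟩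

/-- `P_C(S;n)`: mirrored permutations of type `C_n` whose first `n` entries have peak set `S`. -/
def P_C (n : ℕ) (S : Finset ℕ) : Set (Equiv.Perm (Fin (2 * n))) :=
  {τ ∈ mirroredC n | ∀ i : ℕ, IsPeakFirst n τ i ↔ i ∈ S}

/-- `P_D(S;n)`. -/
def P_D (n : ℕ) (S : Finset ℕ) : Set (Equiv.Perm (Fin (2 * n))) :=
  {τ ∈ mirroredD n | ∀ i : ℕ, IsPeakFirst n τ i ↔ i ∈ S}

/-- Position `i` (1-based, `1 < i ≤ n`) is a peak of the first `n+1` entries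
`τ_1 ⋯ τ_n τ_{n+1}` of `τ` (so a peak at position `n` is possible). -/
def IsPeakHat (n : ℕ) (τ : Equiv.Perm (Fin (2 * n))) (i : ℕ) : Prop :=
  ∃ h : 1 < i ∧ i ≤ n,
    τ ⟨i - 2, by omega⟩ < τ ⟨i - 1, by omega⟩ ∧ τ ⟨i, by omega⟩ < τ ⟨i - 1, by omega⟩

/-- `hat{P}_C(S;n)`: mirrored permutations of type `C_n` such that `τ_1 ⋯ τ_n τ_{n+1}`
has peak set `S`. -/
def hatPC (n : ℕ) (S : Finset ℕ) : Set (Equiv.Perm (Fin (2 * n))) :=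
  {τ ∈ mirroredC n | ∀ i : ℕ, IsPeakHat n τ i ↔ i ∈ S}

/-- `hat{P}_D(S;n)`. -/
def hatPD (n : ℕ) (S : Finset ℕ) : Set (Equiv.Perm (Fin (2 * n))) :=
  {τ ∈ mirroredD n | ∀ i : ℕ, IsPeakHat n τ i ↔ i ∈ S}

/-- `Φ(n,k) = Σ_{i=k}^n C(n,i)`. -/
def Phi (n k : ℕ) : ℕ := ∑ i ∈ Finset.Icc k n, n.choose i

/-- `Ψ(n,k) = 2^n - Φ(n,k)`. -/
def Psi (n k : ℕ) : ℕ := 2 ^ n - Phi n k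

/-- The group `ℬ_n` of signed permutations on `n` letters. -/
def SignedPerms (n : ℕ) : Set (Fin n → ℤ) :=
  {β | (∀ i, 1 ≤ |β i| ∧ |β i| ≤ (n : ℤ)) ∧ Function.Injective fun i => |β i|}

/-- Position `i` (`1 ≤ i ≤ n - 1`) is a peak of the sequence `0, β_1, …, β_n`. -/
def IsPeakB (n : ℕ) (β : Fin n → ℤ) (i : ℕ) : Prop :=
  ∃ h : 1 ≤ i ∧ i < n,
    (if hi : 2 ≤ i then β ⟨i - 2, by omega⟩ else 0) < β ⟨i - 1, by omega⟩ ∧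
      β ⟨i, by omega⟩ < β ⟨i - 1, by omega⟩

/-- `hat{P}_B(R;n)`: signed permutations such that `0, β_1, …, β_n` has peak set `R`. -/
def hatPB (n : ℕ) (R : Finset ℕ) : Set (Fin n → ℤ) :=
  {β ∈ SignedPerms n | ∀ i : ℕ, IsPeakB n β i ↔ i ∈ R}


theorem pmk {n : ℕ} (π : Equiv.Perm (Fin n)) {a b : ℕ} {ha : a < n} (h : a = b) :
    π ⟨a, ha⟩ = π ⟨b, h ▸ ha⟩ := by subst h; rfl

theorem pi_ne {n : ℕ} (π : Equiv.Perm (Fin n)) {a b : ℕ} (ha : a < n) (hb : b < n)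
    (hab : a ≠ b) : π ⟨a, ha⟩ ≠ π ⟨b, hb⟩ := fun h =>
  hab (by simpa [Fin.mk.injEq] using π.injective h)

theorem peak_adj {n : ℕ} (π : Equiv.Perm (Fin n)) {i : ℕ} (h1 : IsPeak π i)
    (h2 : IsPeak π (i + 1)) : False := by
  obtain ⟨⟨hi1, hi2⟩, _, hB⟩ := h1
  obtain ⟨⟨hj1, hj2⟩, hC, _⟩ := h2
  exact absurd hB (not_lt.2 (le_of_lt hC))

theorem descend_of_no_peaks {n : ℕ} (π : Equiv.Perm (Fin n)) (t : ℕ) (hn : 2 ≤ n)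
    (hlast : π ⟨n - 1, by omega⟩ < π ⟨n - 2, by omega⟩)
    (hnp : ∀ i, t + 2 ≤ i → ¬ IsPeak π i) :
    ∀ j (hj : t ≤ j) (hj1 : j + 1 ≤ n - 1), π ⟨j + 1, by omega⟩ < π ⟨j, by omega⟩ := by
  have H : ∀ c j (hj : t ≤ j) (hj1 : j + 1 ≤ n - 1) (hc : n - 2 - j = c),
      π ⟨j + 1, by omega⟩ < π ⟨j, by omega⟩ := by
    intro c
    induction c with
    | zero =>
      intro j hj hj1 hc
      have hj2 : j = n - 2 := by omega
      subst hj2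
      rw [pmk π (show n - 2 + 1 = n - 1 by omega)]
      exact hlast
    | succ c ih =>
      intro j hj hj1 hc
      have hj2 : j + 1 ≤ n - 2 := by omega
      have ih' := ih (j + 1) (by omega) (by omega) (by omega)
      by_contra hcon
      push_neg at hcon
      have hlt : π ⟨j, by omega⟩ < π ⟨j + 1, by omega⟩ :=
        lt_of_le_of_ne hcon (pi_ne π (by omega) (by omega) (by omega)).symm
      exact hnp (j + 2) (by omega) ⟨⟨by omega, by omega⟩, hlt, ih'⟩
  intro j hj hj1
  exact H (n - 2 - j) j hj hj1 rfl

theorem pairwise_desc {n : ℕ} (π : Equiv.Perm (Fin n)) (t : ℕ)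
    (hcons : ∀ j (hj : t ≤ j) (hj1 : j + 1 ≤ n - 1), π ⟨j + 1, by omega⟩ < π ⟨j, by omega⟩) :
    ∀ i j (hi : t ≤ i) (hij : i < j) (hj : j ≤ n - 1), π ⟨j, by omega⟩ < π ⟨i, by omega⟩ := by
  intro i j hi hij hj
  induction j, hij using Nat.le_induction with
  | base => exact hcons i hi hj
  | succ j hj' ih =>
    exact lt_trans (hcons j (by omega) hj) (ih (by omega))

/-- The auxiliary set `A`. -/
def Aset (n m k : ℕ) (hm2 : 2 ≤ m) (hmn : m < n) (S₁ : Finset ℕ) :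
    Set (Equiv.Perm (Fin n)) :=
  {π | ((π ⟨n - 1, by omega⟩ : ℕ) = k - 1) ∧
    (∀ j (hj : m - 1 ≤ j) (hj1 : j + 1 ≤ n - 1), π ⟨j + 1, by omega⟩ < π ⟨j, by omega⟩) ∧
    ∀ i < m - 1, (IsPeak π i ↔ i ∈ S₁)}

section Decomp

variable {n m k : ℕ} {S S₁ S₂ : Finset ℕ} (hm2 : 2 ≤ m) (hmn : m < n) (hk1 : 1 ≤ k)
  (hmS : m ∈ S) (hmax : ∀ x ∈ S, x ≤ m) (hm1S : m - 1 ∉ S)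
  (hS₁ : S₁ = S.erase m) (hS₂ : S₂ = insert (m - 1) S₁)
  (hS₁sub : ∀ x ∈ S₁, 2 ≤ x ∧ x ≤ m - 2)

include hm2 hmn hk1 hmS hmax hm1S hS₁ hS₁sub in
theorem L1 : descTo n S k = {π ∈ Aset n m k hm2 hmn S₁ | IsPeak π m} := by
  ext π
  constructor
  · rintro ⟨hp, hn2, hd, hval⟩
    have htail := descend_of_no_peaks π (m - 1) (by omega) hd
      (fun i hi hpk => by have := (hp i).mp hpk; have := hmax i this; omega)
    refine ⟨⟨by omega, fun j hj hj1 => htail j hj hj1, fun i hi => ?_⟩, (hp m).mpr hmS⟩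
    · rw [hp i, hS₁, Finset.mem_erase]
      constructor
      · exact fun h => ⟨by omega, h⟩
      · exact fun h => h.2
  · rintro ⟨⟨hval, htail, hpre⟩, hpm⟩
    have hincomp : ¬ IsPeak π (m - 1) := fun h =>
      peak_adj π h (by rw [show m - 1 + 1 = m by omega]; exact hpm)
    refine ⟨fun i => ?_, by omega, ?_, by omega⟩
    · rcases lt_trichotomy i m with hi | rfl | hi
      · rcases Nat.lt_or_ge i (m - 1) with hi' | hi'
        · rw [hpre i hi', hS₁, Finset.mem_erase]
          exact ⟨fun h => h.2, fun h => ⟨by omega, h⟩⟩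
        · have hieq : i = m - 1 := by omega
          subst hieq
          simp only [hincomp, hm1S]
      · simp only [hpm, hmS]
      · constructor
        · rintro ⟨⟨h1, h2⟩, hA, hB⟩
          have := htail (i - 2) (by omega) (by omega)
          rw [pmk π (show i - 2 + 1 = i - 1 by omega)] at this
          exact absurd hA (not_lt.2 (le_of_lt this))
        · intro h; have := hmax i h; omega
    · have := htail (n - 2) (by omega) (by omega)
      rwa [pmk π (show n - 2 + 1 = n - 1 by omega)] at this

include hm2 hmn hk1 hS₁ hS₁sub in
theorem L2 : descTo n S₁ k =
    {π ∈ Aset n m k hm2 hmn S₁ | ¬ IsPeak π (m - 1) ∧ ¬ IsPeak π m} := by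
  ext π
  constructor
  · rintro ⟨hp, hn2, hd, hval⟩
    have htail := descend_of_no_peaks π (m - 1) (by omega) hd
      (fun i hi hpk => by have := hS₁sub i ((hp i).mp hpk); omega)
    refine ⟨⟨by omega, fun j hj hj1 => htail j hj hj1, fun i hi => hp i⟩, ?_, ?_⟩
    · intro h; have := hS₁sub _ ((hp _).mp h); omega
    · intro h; have := hS₁sub _ ((hp _).mp h); omega
  · rintro ⟨⟨hval, htail, hpre⟩, hnm1, hnm⟩
    refine ⟨fun i => ?_, by omega, ?_, by omega⟩
    · rcases lt_trichotomy i m with hi | rfl | hi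
      · rcases Nat.lt_or_ge i (m - 1) with hi' | hi'
        · exact hpre i hi'
        · have hieq : i = m - 1 := by omega
          subst hieq
          constructor
          · exact fun h => absurd h hnm1
          · intro h; have := hS₁sub _ h; omega
      · constructor
        · exact fun h => absurd h hnm
        · intro h; have := hS₁sub _ h; omega
      · constructor
        · rintro ⟨⟨h1, h2⟩, hA, hB⟩
          have := htail (i - 2) (by omega) (by omega)
          rw [pmk π (show i - 2 + 1 = i - 1 by omega)] at this
          exact absurd hA (not_lt.2 (le_of_lt this))
        · intro h; have := hS₁sub _ h; omega
    · have := htail (n - 2) (by omega) (by omega)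
      rwa [pmk π (show n - 2 + 1 = n - 1 by omega)] at this

include hm2 hmn hk1 hS₁ hS₂ hS₁sub in
theorem L3 : descTo n S₂ k = {π ∈ Aset n m k hm2 hmn S₁ | IsPeak π (m - 1)} := by
  have hmS₂ : m ∉ S₂ := by
    rw [hS₂, Finset.mem_insert]
    rintro (h | h)
    · omega
    · have := hS₁sub _ h; omega
  ext π
  constructor
  · rintro ⟨hp, hn2, hd, hval⟩
    have hpm1 : IsPeak π (m - 1) := (hp (m - 1)).mpr (by rw [hS₂]; exact Finset.mem_insert_self _ _)
    have htail := descend_of_no_peaks π (m - 1) (by omega) hd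
      (fun i hi hpk => by
        have := (hp i).mp hpk
        rw [hS₂, Finset.mem_insert] at this
        rcases this with h | h
        · omega
        · have := hS₁sub i h; omega)
    refine ⟨⟨by omega, fun j hj hj1 => htail j hj hj1, fun i hi => ?_⟩, hpm1⟩
    · rw [hp i, hS₂, Finset.mem_insert]
      constructor
      · rintro (h | h)
        · omega
        · exact h
      · exact fun h => Or.inr h
  · rintro ⟨⟨hval, htail, hpre⟩, hpm1⟩
    have hnm : ¬ IsPeak π m := fun h =>
      peak_adj π hpm1 (by rw [show m - 1 + 1 = m by omega]; exact h)
    refine ⟨fun i => ?_, by omega, ?_, by omega⟩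
    · rcases lt_trichotomy i m with hi | rfl | hi
      · rcases Nat.lt_or_ge i (m - 1) with hi' | hi'
        · rw [hpre i hi', hS₂, Finset.mem_insert]
          refine ⟨fun h => Or.inr h, fun h => ?_⟩
          rcases h with h | h
          · omega
          · exact h
        · have hieq : i = m - 1 := by omega
          subst hieq
          simp [hpm1, hS₂]
      · simp only [hnm, hmS₂]
      · constructor
        · rintro ⟨⟨h1, h2⟩, hA, hB⟩
          have := htail (i - 2) (by omega) (by omega)
          rw [pmk π (show i - 2 + 1 = i - 1 by omega)] at this
          exact absurd hA (not_lt.2 (le_of_lt this))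
        · intro h
          rw [hS₂, Finset.mem_insert] at h
          rcases h with h | h
          · omega
          · have := hS₁sub _ h; omega
    · have := htail (n - 2) (by omega) (by omega)
      rwa [pmk π (show n - 2 + 1 = n - 1 by omega)] at this

end Decomp


def Wset (n : ℕ) (K : Fin n) (T : Finset (Fin n)) : Finset (Fin n) :=
  Finset.univ \ insert K T

theorem K_not_mem_T {n : ℕ} {K : Fin n} {T : Finset (Fin n)} (hT1 : T ⊆ Finset.Ioi K) :
    K ∉ T := fun h => by simpa using hT1 h

theorem Wcard {n m : ℕ} (hm2 : 2 ≤ m) (hmn : m < n) {K : Fin n} {T : Finset (Fin n)}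
    (hT1 : T ⊆ Finset.Ioi K) (hT2 : T.card = n - m) : (Wset n K T).card = m - 1 := by
  rw [Wset, Finset.card_sdiff_of_subset (Finset.subset_univ _),
    Finset.card_insert_of_notMem (K_not_mem_T hT1), Finset.card_univ, Fintype.card_fin, hT2]
  omega

def buildFun (n m : ℕ) (hm2 : 2 ≤ m) (hmn : m < n) (K : Fin n) (T : Finset (Fin n))
    (hT1 : T ⊆ Finset.Ioi K) (hT2 : T.card = n - m) (σ : Equiv.Perm (Fin (m - 1))) :
    Fin n → Fin n := fun i =>
  if h : (i : ℕ) < m - 1 then (Wset n K T).orderEmbOfFin (Wcard hm2 hmn hT1 hT2) (σ ⟨i, h⟩)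
  else if h2 : (i : ℕ) < n - 1 then T.orderEmbOfFin hT2 ⟨n - 2 - i, by omega⟩
  else K

theorem buildFun_inj (n m : ℕ) (hm2 : 2 ≤ m) (hmn : m < n) (K : Fin n) (T : Finset (Fin n))
    (hT1 : T ⊆ Finset.Ioi K) (hT2 : T.card = n - m) (σ : Equiv.Perm (Fin (m - 1))) :
    Function.Injective (buildFun n m hm2 hmn K T hT1 hT2 σ) := by
  have hWmem : ∀ x, (Wset n K T).orderEmbOfFin (Wcard hm2 hmn hT1 hT2) x ∈ Wset n K T :=
    fun x => Finset.orderEmbOfFin_mem _ _ _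
  have hTmem : ∀ x, T.orderEmbOfFin hT2 x ∈ T := fun x => Finset.orderEmbOfFin_mem _ _ _
  have hWK : ∀ v, v ∈ Wset n K T → v ≠ K := by
    intro v hv; simp [Wset, Finset.mem_sdiff, Finset.mem_insert] at hv; exact hv.1
  have hWT : ∀ v, v ∈ Wset n K T → v ∉ T := by
    intro v hv; simp [Wset, Finset.mem_sdiff, Finset.mem_insert] at hv; exact hv.2
  intro a b hab
  unfold buildFun at hab
  split_ifs at hab with h1 h2 h3 h4 h5 h6 h7 h8
  · have h := σ.injective (((Wset n K T).orderEmbOfFin (Wcard hm2 hmn hT1 hT2)).injective hab)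
    simp only [Fin.mk.injEq] at h
    exact Fin.ext h
  · exfalso; have h := hWmem (σ ⟨↑a, h1⟩); rw [hab] at h; exact hWT _ h (hTmem _)
  · exfalso; have h := hWmem (σ ⟨↑a, h1⟩); rw [hab] at h; exact hWK _ h rfl
  · exfalso; have h := hWmem (σ ⟨↑b, h5⟩); rw [← hab] at h; exact hWT _ h (hTmem _)
  · have h := (T.orderEmbOfFin hT2).injective hab
    simp only [Fin.mk.injEq] at h
    exact Fin.ext (by omega)
  · exfalso
    have h := hTmem ⟨n - 2 - ↑a, by omega⟩
    rw [hab] at h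
    exact absurd (hT1 h) (by simp)
  · exfalso; have h := hWmem (σ ⟨↑b, h7⟩); rw [← hab] at h; exact hWK _ h rfl
  · exfalso
    have h := hTmem ⟨n - 2 - ↑b, by omega⟩
    rw [← hab] at h
    exact absurd (hT1 h) (by simp)
  · exact Fin.ext (by have := a.isLt; have := b.isLt; omega)

noncomputable def buildPerm (n m : ℕ) (hm2 : 2 ≤ m) (hmn : m < n) (K : Fin n) (T : Finset (Fin n))
    (hT1 : T ⊆ Finset.Ioi K) (hT2 : T.card = n - m) (σ : Equiv.Perm (Fin (m - 1))) :
    Equiv.Perm (Fin n) :=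
  Equiv.ofBijective _
    (Finite.injective_iff_bijective.mp (buildFun_inj n m hm2 hmn K T hT1 hT2 σ))

section BuildLemmas

variable (n m : ℕ) (hm2 : 2 ≤ m) (hmn : m < n) (K : Fin n) (T : Finset (Fin n))
  (hT1 : T ⊆ Finset.Ioi K) (hT2 : T.card = n - m) (σ : Equiv.Perm (Fin (m - 1)))

theorem buildPerm_prefix (i : ℕ) (h : i < m - 1) :
    buildPerm n m hm2 hmn K T hT1 hT2 σ ⟨i, by omega⟩ =
      (Wset n K T).orderEmbOfFin (Wcard hm2 hmn hT1 hT2) (σ ⟨i, h⟩) := by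
  show buildFun n m hm2 hmn K T hT1 hT2 σ _ = _
  unfold buildFun
  rw [dif_pos h]

theorem buildPerm_mid (i : ℕ) (h1 : ¬ i < m - 1) (h2 : i < n - 1) :
    buildPerm n m hm2 hmn K T hT1 hT2 σ ⟨i, by omega⟩ =
      T.orderEmbOfFin hT2 ⟨n - 2 - i, by omega⟩ := by
  show buildFun n m hm2 hmn K T hT1 hT2 σ _ = _
  unfold buildFun
  rw [dif_neg h1, dif_pos h2]

theorem buildPerm_last :
    buildPerm n m hm2 hmn K T hT1 hT2 σ ⟨n - 1, by omega⟩ = K := by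
  show buildFun n m hm2 hmn K T hT1 hT2 σ _ = _
  unfold buildFun
  rw [dif_neg (show ¬((n - 1 : ℕ) < m - 1) by omega), dif_neg (show ¬((n - 1 : ℕ) < n - 1) by omega)]

theorem buildPerm_tail (t : Fin (n - m)) :
    buildPerm n m hm2 hmn K T hT1 hT2 σ ⟨n - 2 - (t : ℕ), by omega⟩ =
      T.orderEmbOfFin hT2 t := by
  have htv := t.isLt
  rw [buildPerm_mid n m hm2 hmn K T hT1 hT2 σ (n - 2 - (t : ℕ)) (by omega) (by omega)]
  congr 1
  exact Fin.ext (by simp; omega)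

theorem buildPerm_prefix_lt (a b : ℕ) (ha : a < m - 1) (hb : b < m - 1) :
    buildPerm n m hm2 hmn K T hT1 hT2 σ ⟨a, by omega⟩ <
        buildPerm n m hm2 hmn K T hT1 hT2 σ ⟨b, by omega⟩ ↔
      σ ⟨a, ha⟩ < σ ⟨b, hb⟩ := by
  rw [buildPerm_prefix n m hm2 hmn K T hT1 hT2 σ a ha,
    buildPerm_prefix n m hm2 hmn K T hT1 hT2 σ b hb]
  exact (Finset.orderEmbOfFin _ _).lt_iff_lt

theorem buildPerm_mem (k : ℕ) (hk1 : 1 ≤ k) (S₁ : Finset ℕ)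
    (hS₁sub : ∀ x ∈ S₁, 2 ≤ x ∧ x ≤ m - 2)
    (hσ : σ ∈ peakSetEq (m - 1) S₁) (hK : (K : ℕ) = k - 1) :
    buildPerm n m hm2 hmn K T hT1 hT2 σ ∈ Aset n m k hm2 hmn S₁ := by
  refine ⟨by rw [buildPerm_last]; exact hK, ?_, ?_⟩
  · intro j hj hj1
    rcases Nat.lt_or_ge (j + 1) (n - 1) with hc | hc
    · rw [buildPerm_mid n m hm2 hmn K T hT1 hT2 σ (j + 1) (by omega) hc,
        buildPerm_mid n m hm2 hmn K T hT1 hT2 σ j (by omega) (by omega)]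
      exact (Finset.orderEmbOfFin _ _).strictMono (by rw [Fin.mk_lt_mk]; omega)
    · have hj2 : j + 1 = n - 1 := by omega
      rw [show (⟨j + 1, by omega⟩ : Fin n) = ⟨n - 1, by omega⟩ from Fin.ext (by simp [hj2]),
        buildPerm_last, buildPerm_mid n m hm2 hmn K T hT1 hT2 σ j (by omega) (by omega)]
      have := hT1 (Finset.orderEmbOfFin_mem T hT2 ⟨n - 2 - j, by omega⟩)
      simpa using this
  · intro i hi
    rw [← hσ i]
    constructor
    · rintro ⟨⟨hA1, hA2⟩, hA, hB⟩
      exact ⟨⟨hA1, hi⟩,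
        (buildPerm_prefix_lt n m hm2 hmn K T hT1 hT2 σ (i - 2) (i - 1) (by omega) (by omega)).mp hA,
        (buildPerm_prefix_lt n m hm2 hmn K T hT1 hT2 σ i (i - 1) (by omega) (by omega)).mp hB⟩
    · rintro ⟨⟨hA1, hA2⟩, hA, hB⟩
      exact ⟨⟨hA1, by omega⟩,
        (buildPerm_prefix_lt n m hm2 hmn K T hT1 hT2 σ (i - 2) (i - 1) (by omega) (by omega)).mpr hA,
        (buildPerm_prefix_lt n m hm2 hmn K T hT1 hT2 σ i (i - 1) (by omega) (by omega)).mpr hB⟩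

end BuildLemmas

theorem cancel_iso {α : Type*} [LinearOrder α] {r : ℕ} (V W : Finset α) (h : V = W)
    (hV : V.card = r) (hW : W.card = r) (v : α) (hv : v ∈ V) :
    W.orderEmbOfFin hW ((V.orderIsoOfFin hV).symm ⟨v, hv⟩) = v := by
  subst h
  rw [← Finset.coe_orderIsoOfFin_apply, OrderIso.apply_symm_apply]

theorem mem_iff_exists_emb {α : Type*} [LinearOrder α] {r : ℕ} (s : Finset α)
    (h : s.card = r) (v : α) : v ∈ s ↔ ∃ t, s.orderEmbOfFin h t = v := by
  constructor
  · intro hv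
    have : v ∈ Set.range (s.orderEmbOfFin h) := by
      rw [Finset.range_orderEmbOfFin]; exact hv
    exact this
  · rintro ⟨t, rfl⟩; exact Finset.orderEmbOfFin_mem _ _ _

set_option maxHeartbeats 1000000 in
theorem L4 (n m k : ℕ) (hm2 : 2 ≤ m) (hmn : m < n) (hk1 : 1 ≤ k) (hkn : k ≤ n)
    (S₁ : Finset ℕ) (hS₁sub : ∀ x ∈ S₁, 2 ≤ x ∧ x ≤ m - 2) :
    (Aset n m k hm2 hmn S₁).ncard =
      (n - k).choose (n - m) * (peakSetEq (m - 1) S₁).ncard := by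
  classical
  set K : Fin n := ⟨k - 1, by omega⟩ with hK
  set TS : Set (Finset (Fin n)) := ↑(Finset.powersetCard (n - m) (Finset.Ioi K)) with hTS
  set PS : Set (Equiv.Perm (Fin (m - 1))) := peakSetEq (m - 1) S₁ with hPS
  have hprop : ∀ p : TS, p.1 ⊆ Finset.Ioi K ∧ p.1.card = n - m := by
    intro p
    have h := p.2
    simp only [hTS, Finset.mem_coe, Finset.mem_powersetCard] at h
    exact h
  have key : Nat.card (TS × PS) = Nat.card (Aset n m k hm2 hmn S₁) := by
    apply Nat.card_eq_of_bijective
      (f := fun p : TS × PS =>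
        (⟨buildPerm n m hm2 hmn K p.1.1 (hprop p.1).1 (hprop p.1).2 p.2.1,
          buildPerm_mem n m hm2 hmn K p.1.1 (hprop p.1).1 (hprop p.1).2 p.2.1 k hk1 S₁
            hS₁sub p.2.2 rfl⟩ : Aset n m k hm2 hmn S₁))
    constructor
    · rintro ⟨⟨T, hT⟩, ⟨σ, hσ⟩⟩ ⟨⟨T', hT'⟩, ⟨σ', hσ'⟩⟩ hEq
      simp only [Subtype.mk.injEq] at hEq
      have hTT : T = T' := by
        ext v
        rw [mem_iff_exists_emb T (hprop ⟨T, hT⟩).2 v,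
          mem_iff_exists_emb T' (hprop ⟨T', hT'⟩).2 v]
        constructor
        · rintro ⟨t, rfl⟩
          exact ⟨t, by
            rw [← buildPerm_tail n m hm2 hmn K T' (hprop ⟨T', hT'⟩).1 (hprop ⟨T', hT'⟩).2 σ' t,
              ← hEq, buildPerm_tail]⟩
        · rintro ⟨t, rfl⟩
          exact ⟨t, by
            rw [← buildPerm_tail n m hm2 hmn K T (hprop ⟨T, hT⟩).1 (hprop ⟨T, hT⟩).2 σ t,
              hEq, buildPerm_tail]⟩
      subst hTT
      have hσσ : σ = σ' := by
        apply Equiv.ext; intro x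
        have hx := x.isLt
        have h2 := congrArg (fun (e : Equiv.Perm (Fin n)) => e ⟨(x : ℕ), by omega⟩) hEq
        rw [buildPerm_prefix n m hm2 hmn K T (hprop ⟨T, hT⟩).1 (hprop ⟨T, hT⟩).2 σ (x : ℕ) x.isLt,
          buildPerm_prefix n m hm2 hmn K T (hprop ⟨T, hT'⟩).1 (hprop ⟨T, hT'⟩).2 σ' (x : ℕ)
            x.isLt] at h2
        exact ((Wset n K T).orderEmbOfFin
          (Wcard hm2 hmn (hprop ⟨T, hT⟩).1 (hprop ⟨T, hT⟩).2)).injective h2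
      subst hσσ
      rfl
    · rintro ⟨π, hval, htail, hpre⟩
      have pw := pairwise_desc π (m - 1) htail
      have hKval : π ⟨n - 1, by omega⟩ = K := Fin.ext hval
      set T : Finset (Fin n) :=
        Finset.image (fun t : Fin (n - m) => π ⟨n - 2 - (t : ℕ), by omega⟩) Finset.univ
        with hTdef
      have hT1 : T ⊆ Finset.Ioi K := by
        intro v hv
        simp only [hTdef, Finset.mem_image, Finset.mem_univ, true_and] at hv
        obtain ⟨t, rfl⟩ := hv
        have htl := t.isLt
        have hlt := pw (n - 2 - (t : ℕ)) (n - 1) (by omega) (by omega) (by omega)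
        rw [hKval] at hlt
        exact Finset.mem_Ioi.mpr hlt
      have hT2 : T.card = n - m := by
        have hinj : Function.Injective (fun t : Fin (n - m) => π ⟨n - 2 - (t : ℕ), by omega⟩) := by
          intro t t' h
          have h0 := π.injective h
          simp only [Fin.mk.injEq] at h0
          have h1 := t.isLt; have h2 := t'.isLt
          exact Fin.ext (by omega)
        rw [hTdef, Finset.card_image_of_injective _ hinj, Finset.card_univ, Fintype.card_fin]
      set V : Finset (Fin n) :=
        Finset.image (fun i : Fin (m - 1) => π ⟨(i : ℕ), by omega⟩) Finset.univ with hVdef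
      have hV : V.card = m - 1 := by
        have hinj : Function.Injective (fun i : Fin (m - 1) => π ⟨(i : ℕ), by omega⟩) := by
          intro a b h
          have h0 := π.injective h
          simp only [Fin.mk.injEq] at h0
          exact Fin.ext h0
        rw [hVdef, Finset.card_image_of_injective _ hinj, Finset.card_univ, Fintype.card_fin]
      have hmemV : ∀ i : Fin (m - 1), π ⟨(i : ℕ), by omega⟩ ∈ V := fun i => by
        rw [hVdef]; exact Finset.mem_image_of_mem _ (Finset.mem_univ i)
      set σf : Fin (m - 1) → Fin (m - 1) :=
        fun i => (V.orderIsoOfFin hV).symm ⟨π ⟨(i : ℕ), by omega⟩, hmemV i⟩ with hσf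
      have hσinj : Function.Injective σf := by
        intro a b h
        have h0 := (V.orderIsoOfFin hV).symm.injective h
        simp only [Subtype.mk.injEq] at h0
        have h1 := π.injective h0
        simp only [Fin.mk.injEq] at h1
        exact Fin.ext h1
      set σ : Equiv.Perm (Fin (m - 1)) :=
        Equiv.ofBijective σf (Finite.injective_iff_bijective.mp hσinj) with hσdef
      have keylt : ∀ a b : Fin (m - 1),
          σ a < σ b ↔ π ⟨(a : ℕ), by omega⟩ < π ⟨(b : ℕ), by omega⟩ := by
        intro a b
        rw [hσdef]
        simp only [Equiv.ofBijective_apply, hσf]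
        rw [OrderIso.lt_iff_lt]
        exact Subtype.mk_lt_mk
      have hσPS : σ ∈ PS := by
        rw [hPS]
        intro i
        constructor
        · rintro ⟨⟨h1, h2⟩, hA, hB⟩
          have hpk : IsPeak π i :=
            ⟨⟨h1, by omega⟩, (keylt ⟨i - 2, by omega⟩ ⟨i - 1, by omega⟩).mp hA,
              (keylt ⟨i, by omega⟩ ⟨i - 1, by omega⟩).mp hB⟩
          exact (hpre i h2).mp hpk
        · intro hmem
          have hb := hS₁sub i hmem
          obtain ⟨⟨h1, h2⟩, hA, hB⟩ := (hpre i (by omega)).mpr hmem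
          exact ⟨⟨h1, by omega⟩, (keylt ⟨i - 2, by omega⟩ ⟨i - 1, by omega⟩).mpr hA,
            (keylt ⟨i, by omega⟩ ⟨i - 1, by omega⟩).mpr hB⟩
      have hTTS : T ∈ TS := by
        rw [hTS]
        simp only [Finset.mem_coe, Finset.mem_powersetCard]
        exact ⟨hT1, hT2⟩
      refine ⟨⟨⟨T, hTTS⟩, ⟨σ, hσPS⟩⟩, ?_⟩
      apply Subtype.ext
      apply Equiv.ext
      rintro ⟨iv, hi⟩
      show buildPerm n m hm2 hmn K T _ _ σ ⟨iv, hi⟩ = π ⟨iv, hi⟩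
      by_cases c1 : iv < m - 1
      · rw [buildPerm_prefix n m hm2 hmn K T _ _ σ iv c1]
        have hVW : V = Wset n K T := by
          apply Finset.eq_of_subset_of_card_le
          · intro v hv
            simp only [hVdef, Finset.mem_image, Finset.mem_univ, true_and] at hv
            obtain ⟨a, rfl⟩ := hv
            have ha := a.isLt
            simp only [Wset, Finset.mem_sdiff, Finset.mem_univ, Finset.mem_insert, true_and]
            push_neg
            constructor
            · rw [← hKval]; exact pi_ne π _ _ (by omega)
            · intro hmem
              simp only [hTdef, Finset.mem_image, Finset.mem_univ, true_and] at hmem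
              obtain ⟨t, ht⟩ := hmem
              have h0 := π.injective ht
              simp only [Fin.mk.injEq] at h0
              have h1 := t.isLt
              omega
          · rw [hV, Wcard hm2 hmn hT1 hT2]
        exact cancel_iso V (Wset n K T) hVW hV
          (Wcard hm2 hmn (hprop ⟨T, hTTS⟩).1 (hprop ⟨T, hTTS⟩).2) (π ⟨iv, hi⟩) (hmemV ⟨iv, c1⟩)
      · by_cases c2 : iv < n - 1
        · rw [buildPerm_mid n m hm2 hmn K T _ _ σ iv c1 c2]
          have hu : (fun t : Fin (n - m) => π ⟨n - 2 - (t : ℕ), by omega⟩) =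
              T.orderEmbOfFin (hprop ⟨T, hTTS⟩).2 := by
            apply Finset.orderEmbOfFin_unique
            · intro x; rw [hTdef]; exact Finset.mem_image_of_mem _ (Finset.mem_univ x)
            · intro t t' h
              have h1 := t.isLt; have h2 := t'.isLt
              exact pw (n - 2 - (t' : ℕ)) (n - 2 - (t : ℕ)) (by omega) (by omega) (by omega)
          rw [← hu]
          exact pmk π (show n - 2 - (n - 2 - iv) = iv by omega)
        · have hieq : iv = n - 1 := by omega
          subst hieq
          rw [buildPerm_last]
          exact hKval.symm
  rw [← Nat.card_coe_set_eq, ← key, Nat.card_prod, Nat.card_coe_set_eq,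
    Nat.card_coe_set_eq, hTS, hPS, Set.ncard_coe_finset, Finset.card_powersetCard,
    Fin.card_Ioi]
  congr 2
  show n - 1 - (k - 1) = n - k
  omega


theorem stmt4 (n k : ℕ) (S S₁ S₂ : Finset ℕ) (hS : S.Nonempty)
    (hSsub : ∀ x ∈ S, 0 < x ∧ x < n) (hadm : (peakSetEq n S).Nonempty)
    (m : ℕ) (hm : m = S.max' hS) (hS₁ : S₁ = S.erase m) (hS₂ : S₂ = insert (m - 1) S₁)
    (hk1 : 1 ≤ k) (hkn : k ≤ n) :
    ((descTo n S k).ncard : ℤ) =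
      ((n - k).choose (n - m) : ℤ) * ((peakSetEq (m - 1) S₁).ncard : ℤ)
        - ((descTo n S₁ k).ncard : ℤ) - ((descTo n S₂ k).ncard : ℤ) := by
  have hmS : m ∈ S := hm ▸ S.max'_mem hS
  have hmb := hSsub m hmS
  obtain ⟨π₀, hπ₀⟩ := hadm
  have hm2 : 2 ≤ m := by
    obtain ⟨⟨h1, _⟩, _⟩ := (hπ₀ m).mpr hmS
    omega
  have hmn : m < n := hmb.2
  have h1S : 1 ∉ S := fun h => by
    obtain ⟨⟨h1, _⟩, _⟩ := (hπ₀ 1).mpr h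
    omega
  have hm1S : m - 1 ∉ S := fun h => by
    refine peak_adj π₀ ((hπ₀ (m - 1)).mpr h) ?_
    rw [show m - 1 + 1 = m by omega]
    exact (hπ₀ m).mpr hmS
  have hmax : ∀ x ∈ S, x ≤ m := fun x hx => hm ▸ S.le_max' x hx
  have hS₁sub : ∀ x ∈ S₁, 2 ≤ x ∧ x ≤ m - 2 := by
    intro x hx
    rw [hS₁, Finset.mem_erase] at hx
    obtain ⟨hne, hxS⟩ := hx
    have hb := hSsub x hxS
    have hle := hmax x hxS
    have hx1 : x ≠ 1 := fun h => h1S (h ▸ hxS)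
    have hxm1 : x ≠ m - 1 := fun h => hm1S (h ▸ hxS)
    omega
  have e1 := L1 hm2 hmn hk1 hmS hmax hm1S hS₁ hS₁sub
  have e2 := L2 hm2 hmn hk1 hS₁ hS₁sub
  have e3 := L3 hm2 hmn hk1 hS₁ hS₂ hS₁sub
  have hfin : ∀ s : Set (Equiv.Perm (Fin n)), s.Finite := fun s => s.toFinite
  set A := Aset n m k hm2 hmn S₁ with hA
  have hsplit : A.ncard =
      (descTo n S k).ncard + (descTo n S₁ k).ncard + (descTo n S₂ k).ncard := by
    rw [e1, e2, e3]
    have hcover : A = ({π ∈ A | IsPeak π m} ∪ {π ∈ A | ¬IsPeak π (m - 1) ∧ ¬IsPeak π m}) ∪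
        {π ∈ A | IsPeak π (m - 1)} := by
      ext π
      constructor
      · intro h
        by_cases p1 : IsPeak π m
        · exact Or.inl (Or.inl ⟨h, p1⟩)
        · by_cases p2 : IsPeak π (m - 1)
          · exact Or.inr ⟨h, p2⟩
          · exact Or.inl (Or.inr ⟨h, p2, p1⟩)
      · rintro ((⟨h, _⟩ | ⟨h, _⟩) | ⟨h, _⟩) <;> exact h
    have hd1 : Disjoint {π ∈ A | IsPeak π m} {π ∈ A | ¬IsPeak π (m - 1) ∧ ¬IsPeak π m} := by
      rw [Set.disjoint_left]
      rintro π ⟨_, hp⟩ ⟨_, _, hnp⟩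
      exact hnp hp
    have hd2 : Disjoint ({π ∈ A | IsPeak π m} ∪ {π ∈ A | ¬IsPeak π (m - 1) ∧ ¬IsPeak π m})
        {π ∈ A | IsPeak π (m - 1)} := by
      rw [Set.disjoint_left]
      rintro π (⟨_, hp⟩ | ⟨_, hnp, _⟩) ⟨_, hq⟩
      · exact peak_adj π hq (by rw [show m - 1 + 1 = m by omega]; exact hp)
      · exact hnp hq
    conv_lhs => rw [hcover]
    rw [Set.ncard_union_eq hd2 ((hfin _).union (hfin _)) (hfin _),
      Set.ncard_union_eq hd1 (hfin _) (hfin _)]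
  have hcount := L4 n m k hm2 hmn hk1 hkn S₁ hS₁sub
  rw [← hA, hsplit] at hcount
  have hz := congrArg (Nat.cast : ℕ → ℤ) hcount
  push_cast at hz
  linarith
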